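/- Let k = ZMod 2, let B = MvPolynomial (Fin 3) k with variables x₀, x₁, x₂, let I ⊆ B be the ideal generated by x₀·x₁ + x₀·x₂ + x₁·x₂, and let R = B ⧸ I. Let A = MvPolynomial (Fin 2) k with variables y₀, y₁, and let φ : A →ₐ[k] R be the k-algebra homomorphism sending y₀ to the class of x₀ + x₂ and y₁ to the class of x₁ + x₂; regard R as an A-module via φ. Then R is a free A-module of rank 2 with basis (1, class of x₀), i.e. there is an A-module basis of R indexed by Fin 2 whose first element is 1 and whose second element is the residue class of x₀. (This is the claim that F₂[u_{σ₁},u_{σ₂},u_{σ'}]/(u_{σ₁}u_{σ₂}+u_{σ₁}u_{σ'}+u_{σ₂}u_{σ'}) is freely generated in degrees 0 and 1 as a module over F₂[u_{σ₁}+u_{σ'}, u_{σ₂}+u_{σ'}].) -/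

import Mathlib

/-!
STATEMENT 8: Over `k = ZMod 2`, the ring
`R = k[x₀,x₁,x₂]/(x₀x₁ + x₀x₂ + x₁x₂)` is a free module of rank 2, with basis
`(1, x₀)`, over the polynomial ring `A = k[y₀,y₁]` acting through the algebra
map `y₀ ↦ x₀ + x₂`, `y₁ ↦ x₁ + x₂`.
-/

open MvPolynomial

noncomputable section

/-- The quotient ring `R = F₂[x₀,x₁,x₂]/(x₀x₁ + x₀x₂ + x₁x₂)`. -/
abbrev Rquot : Type :=
  MvPolynomial (Fin 3) (ZMod 2) ⧸
    (Ideal.span {(X 0 * X 1 + X 0 * X 2 + X 1 * X 2 : MvPolynomial (Fin 3) (ZMod 2))})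

/-- The quotient map `F₂[x₀,x₁,x₂] → R`. -/
def qmk : MvPolynomial (Fin 3) (ZMod 2) →+* Rquot :=
  Ideal.Quotient.mk _

/-- The algebra map `φ : F₂[y₀,y₁] → R` sending `y₀ ↦ x₀ + x₂` and `y₁ ↦ x₁ + x₂`. -/
def phi : MvPolynomial (Fin 2) (ZMod 2) →ₐ[ZMod 2] Rquot :=
  aeval ![qmk (X 0 + X 2), qmk (X 1 + X 2)]

-- `R` as a module over `A = F₂[y₀,y₁]` by restriction of scalars along `φ`.
set_option synthInstance.maxHeartbeats 1000000 in
instance : Module (MvPolynomial (Fin 2) (ZMod 2)) Rquot :=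
  Module.compHom Rquot phi.toRingHom

abbrev Apoly := MvPolynomial (Fin 2) (ZMod 2)

def cpoly : Apoly := X 0 * X 0 + X 0 * X 1

def fpoly : Polynomial Apoly := Polynomial.X ^ 2 + Polynomial.C cpoly

lemma fpoly_monic : fpoly.Monic :=
  Polynomial.monic_X_pow_add_C _ two_ne_zero

lemma two_eq_zero {S : Type*} [CommRing S] [Algebra (ZMod 2) S] : (2 : S) = 0 := by
  calc (2 : S) = algebraMap (ZMod 2) S 2 := by rw [map_ofNat]
    _ = 0 := by rw [show (2 : ZMod 2) = 0 by decide, map_zero]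

-- ψB : B →ₐ AdjoinRoot fpoly
def psiB : MvPolynomial (Fin 3) (ZMod 2) →ₐ[ZMod 2] AdjoinRoot fpoly :=
  aeval ![AdjoinRoot.root fpoly,
    AdjoinRoot.root fpoly + AdjoinRoot.of fpoly (X 0 + X 1),
    AdjoinRoot.root fpoly + AdjoinRoot.of fpoly (X 0)]

lemma root_sq : (AdjoinRoot.root fpoly) ^ 2 + AdjoinRoot.of fpoly cpoly = 0 := by
  have h : Polynomial.eval₂ (AdjoinRoot.of fpoly) (AdjoinRoot.root fpoly)
      (Polynomial.X ^ 2 + Polynomial.C cpoly) = 0 := AdjoinRoot.eval₂_root fpoly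
  rw [Polynomial.eval₂_add, Polynomial.eval₂_X_pow, Polynomial.eval₂_C] at h
  exact h

lemma psiB_gen : psiB (X 0 * X 1 + X 0 * X 2 + X 1 * X 2) = 0 := by
  set t := AdjoinRoot.root fpoly
  have h2 : (2 : AdjoinRoot fpoly) = 0 := two_eq_zero
  have hr := root_sq
  simp only [psiB, map_add, map_mul, aeval_X, Matrix.cons_val_zero, Matrix.cons_val_one,
    Matrix.head_cons, Matrix.cons_val_two, Matrix.tail_cons]
  have hc : AdjoinRoot.of fpoly cpoly =
      AdjoinRoot.of fpoly (X 0) * AdjoinRoot.of fpoly (X 0) +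
      AdjoinRoot.of fpoly (X 0) * AdjoinRoot.of fpoly (X 1) := by
    rw [cpoly]; push_cast [map_add, map_mul]; ring
  rw [hc] at hr
  set u := AdjoinRoot.of fpoly (X 0 : Apoly)
  set v := AdjoinRoot.of fpoly (X 1 : Apoly)
  linear_combination hr + (t^2 + 2*t*u + t*v) * h2

def psi : Rquot →+* AdjoinRoot fpoly :=
  Ideal.Quotient.lift _ psiB.toRingHom (by
    intro a ha
    rw [← RingHom.mem_ker]
    refine Ideal.span_le.mpr ?_ ha
    intro x hx
    simp only [Set.mem_singleton_iff] at hx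
    subst hx
    simpa [RingHom.mem_ker] using psiB_gen)

lemma eval2_phi_x0 : fpoly.eval₂ phi.toRingHom (qmk (X 0)) = 0 := by
  have h2 : (2 : Rquot) = 0 := two_eq_zero
  have hrel : qmk (X 0 * X 1 + X 0 * X 2 + X 1 * X 2) = 0 := by
    rw [qmk, Ideal.Quotient.eq_zero_iff_mem]
    exact Ideal.subset_span rfl
  simp only [map_add, map_mul] at hrel
  simp only [fpoly, Polynomial.eval₂_add, Polynomial.eval₂_pow, Polynomial.eval₂_X,
    Polynomial.eval₂_C]
  have h0 : phi.toRingHom (X 0) = qmk (X 0) + qmk (X 2) := by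
    simp [phi, qmk, map_add]
  have h1 : phi.toRingHom (X 1) = qmk (X 1) + qmk (X 2) := by
    simp [phi, qmk, map_add]
  have hc : phi.toRingHom cpoly =
      (qmk (X 0) + qmk (X 2)) * (qmk (X 0) + qmk (X 2)) +
      (qmk (X 0) + qmk (X 2)) * (qmk (X 1) + qmk (X 2)) := by
    rw [cpoly, map_add, map_mul, map_mul, h0, h1]
  rw [hc]
  set a := qmk (X 0); set b := qmk (X 1); set c := qmk (X 2)
  linear_combination hrel + (a^2 + a*c + c^2) * h2

def chi : AdjoinRoot fpoly →+* Rquot :=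
  AdjoinRoot.lift phi.toRingHom (qmk (X 0)) eval2_phi_x0

end

noncomputable section

lemma chi_of (a : Apoly) : chi (AdjoinRoot.of fpoly a) = phi a :=
  AdjoinRoot.lift_of eval2_phi_x0

lemma chi_root : chi (AdjoinRoot.root fpoly) = qmk (X 0) :=
  AdjoinRoot.lift_root eval2_phi_x0

lemma psi_qmk (p : MvPolynomial (Fin 3) (ZMod 2)) : psi (qmk p) = psiB p := rfl

lemma hom_inv : psi.comp chi = RingHom.id (AdjoinRoot fpoly) := by
  have h2 : (2 : AdjoinRoot fpoly) = 0 := two_eq_zero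
  refine Ideal.Quotient.ringHom_ext ?_
  refine Polynomial.ringHom_ext' ?_ ?_
  · refine MvPolynomial.ringHom_ext' (RingHom.ext_zmod _ _) ?_
    intro i
    have : ((psi.comp chi).comp (AdjoinRoot.mk fpoly)).comp Polynomial.C
        = (psi.comp (AdjoinRoot.lift phi.toRingHom (qmk (X 0)) eval2_phi_x0)).comp
          (AdjoinRoot.of fpoly) := rfl
    fin_cases i <;>
    · show psi (chi (AdjoinRoot.of fpoly _)) = AdjoinRoot.of fpoly _
      rw [chi_of]
      simp only [phi, aeval_X, Fin.mk_zero, Fin.mk_one, Matrix.cons_val_zero,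
        Matrix.cons_val_one, Matrix.head_cons, map_add, psi_qmk]
      simp only [psiB, aeval_X, Fin.mk_zero, Fin.mk_one, Matrix.cons_val_zero, Matrix.cons_val_one,
        Matrix.head_cons, Matrix.cons_val_two, Matrix.tail_cons, map_add]
      first
      | linear_combination (AdjoinRoot.root fpoly) * h2
      | linear_combination (AdjoinRoot.root fpoly + AdjoinRoot.of fpoly (X 0)) * h2
  · show psi (chi (AdjoinRoot.root fpoly)) = AdjoinRoot.root fpoly
    rw [chi_root, psi_qmk]
    simp [psiB]

lemma inv_hom : chi.comp psi = RingHom.id Rquot := by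
  have h2 : (2 : Rquot) = 0 := two_eq_zero
  refine Ideal.Quotient.ringHom_ext ?_
  refine MvPolynomial.ringHom_ext' (RingHom.ext_zmod _ _) ?_
  intro i
  show chi (psi (qmk (X i))) = qmk (X i)
  rw [psi_qmk]
  have e0 : psiB (X 0) = AdjoinRoot.root fpoly := by simp [psiB]
  have e1 : psiB (X 1) = AdjoinRoot.root fpoly + AdjoinRoot.of fpoly (X 0)
      + AdjoinRoot.of fpoly (X 1) := by simp [psiB]; ring
  have e2 : psiB (X 2) = AdjoinRoot.root fpoly + AdjoinRoot.of fpoly (X 0) := by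
    simp [psiB]
  have p0 : phi (X 0) = qmk (X 0) + qmk (X 2) := by simp [phi, qmk]
  have p1 : phi (X 1) = qmk (X 1) + qmk (X 2) := by simp [phi, qmk]
  fin_cases i
  · show chi (psiB (X 0)) = qmk (X 0)
    rw [e0, chi_root]
  · show chi (psiB (X 1)) = qmk (X 1)
    rw [e1, map_add, map_add, chi_root, chi_of, chi_of, p0, p1]
    linear_combination (qmk (X 0) + qmk (X 2)) * h2
  · show chi (psiB (X 2)) = qmk (X 2)
    rw [e2, map_add, chi_root, chi_of, p0]
    linear_combination (qmk (X 0)) * h2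

def eRing : AdjoinRoot fpoly ≃+* Rquot := RingEquiv.ofRingHom chi psi inv_hom hom_inv

set_option synthInstance.maxHeartbeats 1000000

lemma smul_def (a : Apoly) (x : Rquot) : a • x = phi a * x := rfl

set_option synthInstance.maxHeartbeats 1000000 in
def eLin : AdjoinRoot fpoly ≃ₗ[Apoly] Rquot :=
  { eRing with
    map_add' := map_add eRing
    map_smul' := by
      intro a x
      show eRing (a • x) = a • eRing x
      rw [smul_def, Algebra.smul_def, map_mul]
      congr 1
      show chi (AdjoinRoot.of fpoly a) = phi a
      exact chi_of a }

set_option synthInstance.maxHeartbeats 1000000 in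
theorem quotient_free_of_rank_two_over_subalgebra :
    ∃ b : Module.Basis (Fin 2) (MvPolynomial (Fin 2) (ZMod 2)) Rquot,
      b 0 = 1 ∧ b 1 = qmk (X 0) := by
  have hdeg : fpoly.natDegree = 2 := by
    rw [fpoly]
    compute_degree!
  let pb := AdjoinRoot.powerBasis' fpoly_monic
  refine ⟨((pb.basis.reindex (finCongr (by rw [AdjoinRoot.powerBasis'_dim, hdeg]))).map eLin),
    ?_, ?_⟩
  · rw [Module.Basis.map_apply, Module.Basis.reindex_apply]
    have : pb.basis ((finCongr (by rw [AdjoinRoot.powerBasis'_dim, hdeg] : pb.dim = 2)).symm 0)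
        = pb.gen ^ ((0 : Fin 2) : ℕ) := by
      rw [pb.basis_eq_pow]; rfl
    rw [this]
    simp only [Fin.val_zero, pow_zero]
    exact map_one eRing
  · rw [Module.Basis.map_apply, Module.Basis.reindex_apply]
    have : pb.basis ((finCongr (by rw [AdjoinRoot.powerBasis'_dim, hdeg] : pb.dim = 2)).symm 1)
        = pb.gen ^ ((1 : Fin 2) : ℕ) := by
      rw [pb.basis_eq_pow]; rfl
    rw [this]
    simp only [Fin.val_one, pow_one]
    show eRing pb.gen = qmk (X 0)
    rw [AdjoinRoot.powerBasis'_gen]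
    exact chi_root


end
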